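/- With $\tau$ and $r_{M,k}$ as in the translation of $\ell$-group terms to MV-terms: if $\phi, \psi$ are $\ell$-group terms of depth at most $k$ and $a_1,\dots,a_n \in [-2^M, 2^M]$, then $f_\phi(a_1,\dots,a_n) = f_\psi(a_1,\dots,a_n)$ holds in the real $\ell$-group if and only if $f_{\tau(\phi)}(r_{M,k}(a_1),\dots,r_{M,k}(a_n)) = f_{\tau(\psi)}(r_{M,k}(a_1),\dots,r_{M,k}(a_n))$ holds in the standard MV-algebra with $1/2$. -/

import Mathlib

/-- Terms of abelian ℓ-groups in `n` variables. -/
inductive AbTerm (n : ℕ) where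
  | var  : Fin n → AbTerm n
  | zero : AbTerm n
  | neg  : AbTerm n → AbTerm n
  | add  : AbTerm n → AbTerm n → AbTerm n
  | inf  : AbTerm n → AbTerm n → AbTerm n
  | sup  : AbTerm n → AbTerm n → AbTerm n

namespace AbTerm

/-- Depth of a term. -/
def depth {n : ℕ} : AbTerm n → ℕ
  | var _ => 0
  | zero => 0
  | neg φ => φ.depth + 1
  | add φ ψ => max φ.depth ψ.depth + 1
  | inf φ ψ => max φ.depth ψ.depth + 1
  | sup φ ψ => max φ.depth ψ.depth + 1

/-- The term function `f_φ` on the ℓ-group `⟨ℝ, +, -, min, max, 0⟩`. -/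
noncomputable def evalR {n : ℕ} : AbTerm n → (Fin n → ℝ) → ℝ
  | var i, v => v i
  | zero, _ => 0
  | neg φ, v => -(φ.evalR v)
  | add φ ψ, v => φ.evalR v + ψ.evalR v
  | inf φ ψ, v => min (φ.evalR v) (ψ.evalR v)
  | sup φ ψ, v => max (φ.evalR v) (ψ.evalR v)

/-- The term function `f_{τ(φ)}` of the translated term on the standard
MV-algebra with constant `1/2` (computed compositionally, following the
clauses of the translation `τ`). -/
noncomputable def tauEval {n : ℕ} : AbTerm n → (Fin n → ℝ) → ℝ
  | var i, v => v i
  | zero, _ => 1 / 2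
  | neg φ, v => 1 - φ.tauEval v
  | add φ ψ, v =>
      max 0 (min 1 (φ.tauEval v + ψ.tauEval v) +
        min 1 (1 / 2 + max 0 (φ.tauEval v + ψ.tauEval v - 1)) - 1)
  | inf φ ψ, v => min (φ.tauEval v) (ψ.tauEval v)
  | sup φ ψ, v => max (φ.tauEval v) (ψ.tauEval v)

end AbTerm



lemma evalR_abs_le (M : ℕ) {n : ℕ} (a : Fin n → ℝ)
    (ha : ∀ i, a i ∈ Set.Icc (-(2 ^ M : ℝ)) (2 ^ M)) :
    ∀ φ : AbTerm n, |φ.evalR a| ≤ 2 ^ (M + φ.depth) := by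
  intro φ
  induction φ with
  | var i =>
      have := ha i
      simp only [Set.mem_Icc] at this
      simpa [AbTerm.evalR, AbTerm.depth, abs_le] using this
  | zero =>
      simp only [AbTerm.evalR, AbTerm.depth, abs_zero]
      positivity
  | neg φ ih =>
      simp only [AbTerm.evalR, AbTerm.depth, abs_neg]
      calc |φ.evalR a| ≤ 2 ^ (M + φ.depth) := ih
        _ ≤ 2 ^ (M + (φ.depth + 1)) := by
            apply pow_le_pow_right₀ (by norm_num); omega
  | add φ ψ ih1 ih2 =>
      simp only [AbTerm.evalR, AbTerm.depth]
      calc |φ.evalR a + ψ.evalR a| ≤ |φ.evalR a| + |ψ.evalR a| := abs_add_le _ _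
        _ ≤ 2 ^ (M + φ.depth) + 2 ^ (M + ψ.depth) := add_le_add ih1 ih2
        _ ≤ 2 ^ (M + max φ.depth ψ.depth) + 2 ^ (M + max φ.depth ψ.depth) := by
            gcongr <;> [norm_num; omega; norm_num; omega]
        _ = 2 ^ (M + (max φ.depth ψ.depth + 1)) := by ring
  | inf φ ψ ih1 ih2 =>
      simp only [AbTerm.evalR, AbTerm.depth]
      have h1 : (2:ℝ) ^ (M + φ.depth) ≤ 2 ^ (M + (max φ.depth ψ.depth + 1)) := by
        apply pow_le_pow_right₀ (by norm_num); omega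
      have h2 : (2:ℝ) ^ (M + ψ.depth) ≤ 2 ^ (M + (max φ.depth ψ.depth + 1)) := by
        apply pow_le_pow_right₀ (by norm_num); omega
      rcases le_total (φ.evalR a) (ψ.evalR a) with h | h
      · rw [min_eq_left h]; exact ih1.trans h1
      · rw [min_eq_right h]; exact ih2.trans h2
  | sup φ ψ ih1 ih2 =>
      simp only [AbTerm.evalR, AbTerm.depth]
      have h1 : (2:ℝ) ^ (M + φ.depth) ≤ 2 ^ (M + (max φ.depth ψ.depth + 1)) := by
        apply pow_le_pow_right₀ (by norm_num); omega
      have h2 : (2:ℝ) ^ (M + ψ.depth) ≤ 2 ^ (M + (max φ.depth ψ.depth + 1)) := by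
        apply pow_le_pow_right₀ (by norm_num); omega
      rcases le_total (φ.evalR a) (ψ.evalR a) with h | h
      · rw [max_eq_right h]; exact ih2.trans h2
      · rw [max_eq_left h]; exact ih1.trans h1

lemma tauEval_eq_affine (M k : ℕ) {n : ℕ} (a : Fin n → ℝ)
    (ha : ∀ i, a i ∈ Set.Icc (-(2 ^ M : ℝ)) (2 ^ M)) :
    ∀ φ : AbTerm n, φ.depth ≤ k →
      φ.tauEval (fun i => a i / 2 ^ (M + k + 1) + 1 / 2) =
        φ.evalR a / 2 ^ (M + k + 1) + 1 / 2 := by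
  have hD : (0:ℝ) < 2 ^ (M + k + 1) := by positivity
  have bound : ∀ φ : AbTerm n, φ.depth ≤ k →
      |φ.evalR a| ≤ 2 ^ (M + k + 1) / 2 := by
    intro φ hφ
    calc |φ.evalR a| ≤ 2 ^ (M + φ.depth) := evalR_abs_le M a ha φ
      _ ≤ 2 ^ (M + k) := by apply pow_le_pow_right₀ (by norm_num); omega
      _ = 2 ^ (M + k + 1) / 2 := by rw [pow_succ]; ring
  intro φ
  induction φ with
  | var i => intro _; rfl
  | zero =>
      intro _
      simp [AbTerm.tauEval, AbTerm.evalR]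
  | neg φ ih =>
      intro h
      have hd : φ.depth ≤ k := by simp [AbTerm.depth] at h; omega
      simp only [AbTerm.tauEval, AbTerm.evalR, ih hd]
      ring
  | add φ ψ ih1 ih2 =>
      intro h
      have hd1 : φ.depth ≤ k := by simp [AbTerm.depth] at h; omega
      have hd2 : ψ.depth ≤ k := by simp [AbTerm.depth] at h; omega
      have b1 := bound φ hd1
      have b2 := bound ψ hd2
      have bs := bound _ h
      simp only [AbTerm.evalR, abs_le] at b1 b2 bs
      simp only [AbTerm.tauEval, AbTerm.evalR, ih1 hd1, ih2 hd2]
      set u := φ.evalR a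
      set w := ψ.evalR a
      have hsum : u / 2 ^ (M + k + 1) + 1 / 2 + (w / 2 ^ (M + k + 1) + 1 / 2)
          = (u + w) / 2 ^ (M + k + 1) + 1 := by ring
      rw [hsum]
      have hle : (u + w) / 2 ^ (M + k + 1) ≤ 1 / 2 := by
        rw [div_le_iff₀ hD]; nlinarith [bs.2]
      have hge : -(1 / 2) ≤ (u + w) / 2 ^ (M + k + 1) := by
        rw [le_div_iff₀ hD]; nlinarith [bs.1]
      have h1 : min 1 ((u + w) / 2 ^ (M + k + 1) + 1)
          = 1 + min 0 ((u + w) / 2 ^ (M + k + 1)) := by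
        rcases le_total ((u + w) / 2 ^ (M + k + 1)) 0 with hc | hc
        · rw [min_eq_right (by linarith), min_eq_right hc]; ring
        · rw [min_eq_left (by linarith), min_eq_left hc]; ring
      have h2 : max 0 ((u + w) / 2 ^ (M + k + 1) + 1 - 1)
          = max 0 ((u + w) / 2 ^ (M + k + 1)) := by ring_nf
      rw [h1, h2]
      have h3 : min 1 (1 / 2 + max 0 ((u + w) / 2 ^ (M + k + 1)))
          = 1 / 2 + max 0 ((u + w) / 2 ^ (M + k + 1)) := by
        apply min_eq_right
        rcases le_total ((u + w) / 2 ^ (M + k + 1)) 0 with hc | hc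
        · rw [max_eq_left hc]; norm_num
        · rw [max_eq_right hc]; linarith
      rw [h3]
      have h4 : 1 + min 0 ((u + w) / 2 ^ (M + k + 1)) +
          (1 / 2 + max 0 ((u + w) / 2 ^ (M + k + 1))) - 1
          = (u + w) / 2 ^ (M + k + 1) + 1 / 2 := by
        rcases le_total ((u + w) / 2 ^ (M + k + 1)) 0 with hc | hc
        · rw [min_eq_right hc, max_eq_left hc]; ring
        · rw [min_eq_left hc, max_eq_right hc]; ring
      rw [h4]
      apply max_eq_right
      linarith
  | inf φ ψ ih1 ih2 =>
      intro h
      have hd1 : φ.depth ≤ k := by simp [AbTerm.depth] at h; omega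
      have hd2 : ψ.depth ≤ k := by simp [AbTerm.depth] at h; omega
      simp only [AbTerm.tauEval, AbTerm.evalR, ih1 hd1, ih2 hd2]
      rcases le_total (φ.evalR a) (ψ.evalR a) with hc | hc
      · rw [min_eq_left hc, min_eq_left (by gcongr)]
      · rw [min_eq_right hc, min_eq_right (by gcongr)]
  | sup φ ψ ih1 ih2 =>
      intro h
      have hd1 : φ.depth ≤ k := by simp [AbTerm.depth] at h; omega
      have hd2 : ψ.depth ≤ k := by simp [AbTerm.depth] at h; omega
      simp only [AbTerm.tauEval, AbTerm.evalR, ih1 hd1, ih2 hd2]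
      rcases le_total (φ.evalR a) (ψ.evalR a) with hc | hc
      · rw [max_eq_right hc, max_eq_right (by gcongr)]
      · rw [max_eq_left hc, max_eq_left (by gcongr)]

theorem tau_preserves_and_reflects_identities (M k : ℕ) {n : ℕ}
    (φ ψ : AbTerm n) (hφ : φ.depth ≤ k) (hψ : ψ.depth ≤ k) (a : Fin n → ℝ)
    (ha : ∀ i, a i ∈ Set.Icc (-(2 ^ M : ℝ)) (2 ^ M)) :
    φ.evalR a = ψ.evalR a ↔
      φ.tauEval (fun i => a i / 2 ^ (M + k + 1) + 1 / 2) =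
        ψ.tauEval (fun i => a i / 2 ^ (M + k + 1) + 1 / 2) := by
  rw [tauEval_eq_affine M k a ha φ hφ, tauEval_eq_affine M k a ha ψ hψ]
  have hD : (0:ℝ) < 2 ^ (M + k + 1) := by positivity
  constructor
  · intro h; rw [h]
  · intro h
    field_simp at h
    linarith
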